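/- Suppose {d_n : A → A₁} are linear maps with d_0 the inclusion, M is an (A,B)-bimodule faithful as a left A₁-module, and {h_n : M → M} satisfy h_0 = id and h_n(am) = Σ_{i+j=n} d_i(a)h_j(m) for all a ∈ A, m ∈ M, n ∈ ℕ. If {d_i}_{i<n} is a higher derivation up to order n−1 (i.e., d_r(aa′) = Σ_{i+j=r} d_i(a)d_j(a′) for all r < n), then d_n(aa′) = Σ_{p+q=n} d_p(a)d_q(a′) for all a, a′ ∈ A. -/

import Mathlib

open MulOpposite Finset

/-- Reassociation of a double antidiagonal sum: summing over `i + (k + l) = n`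
equals summing over `(i + k) + l = n`. -/
lemma sum_antidiagonal_assoc_aux {γ : Type*} [AddCommMonoid γ] (n : ℕ)
    (F : ℕ → ℕ → ℕ → γ) :
    ∑ ij ∈ Finset.HasAntidiagonal.antidiagonal n, ∑ kl ∈ Finset.HasAntidiagonal.antidiagonal ij.2, F ij.1 kl.1 kl.2 =
    ∑ ij ∈ Finset.HasAntidiagonal.antidiagonal n, ∑ kl ∈ Finset.HasAntidiagonal.antidiagonal ij.1, F kl.1 kl.2 ij.2 := by
  rw [Finset.sum_sigma', Finset.sum_sigma']
  refine Finset.sum_nbij' (i := fun x => ⟨(x.1.1 + x.2.1, x.2.2), (x.1.1, x.2.1)⟩)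
    (j := fun x => ⟨(x.2.1, x.2.2 + x.1.2), (x.2.2, x.1.2)⟩) ?_ ?_ ?_ ?_ ?_
  · rintro ⟨⟨i, j⟩, ⟨k, l⟩⟩ hx
    simp only [Finset.mem_sigma, Finset.HasAntidiagonal.mem_antidiagonal, and_true, true_and] at hx ⊢
    omega
  · rintro ⟨⟨i, j⟩, ⟨k, l⟩⟩ hx
    simp only [Finset.mem_sigma, Finset.HasAntidiagonal.mem_antidiagonal, and_true, true_and] at hx ⊢
    omega
  · rintro ⟨⟨i, j⟩, ⟨k, l⟩⟩ hx
    simp only [Finset.mem_sigma, Finset.HasAntidiagonal.mem_antidiagonal] at hx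
    simp only [Sigma.mk.inj_iff, Prod.mk.injEq, heq_eq_eq, true_and, and_true]
    omega
  · rintro ⟨⟨i, j⟩, ⟨k, l⟩⟩ hx
    simp only [Finset.mem_sigma, Finset.HasAntidiagonal.mem_antidiagonal] at hx
    simp only [Sigma.mk.inj_iff, Prod.mk.injEq, heq_eq_eq, true_and, and_true]
    omega
  · rintro ⟨⟨i, j⟩, ⟨k, l⟩⟩ _
    rfl

/-- If `{d_i}_{i<n}` is a higher derivation up to order `n-1` and the maps
`h_n : M → M` satisfy `h_0 = id` and `h_n(am) = Σ_{i+j=n} d_i(a)h_j(m)` on a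
faithful left `A₁`-module `M`, then the product rule holds at order `n` as well. -/
theorem higher_derivation_step_from_faithful_module
    (R A A₁ B M : Type*) [CommRing R] [Ring A] [Ring A₁] [Ring B]
    [Algebra R A] [Algebra R A₁] [Algebra R B]
    [AddCommGroup M] [Module R M] [Module A₁ M] [Module Bᵐᵒᵖ M]
    [SMulCommClass A₁ Bᵐᵒᵖ M] [IsScalarTower R A₁ M]
    (φA : A →ₐ[R] A₁) (hφA : Function.Injective φA)
    (faith : ∀ x : A₁, (∀ m : M, x • m = 0) → x = 0)
    (d : ℕ → A →ₗ[R] A₁) (hd0 : ∀ a : A, d 0 a = φA a)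
    (h : ℕ → M →ₗ[R] M) (hh0 : h 0 = LinearMap.id)
    (hcompat : ∀ (n : ℕ) (a : A) (m : M),
      h n (φA a • m) = ∑ ij ∈ antidiagonal n, d ij.1 a • h ij.2 m)
    (n : ℕ)
    (hind : ∀ r < n, ∀ a a' : A,
      d r (a * a') = ∑ ij ∈ antidiagonal r, d ij.1 a * d ij.2 a') :
    ∀ a a' : A, d n (a * a') = ∑ ij ∈ antidiagonal n, d ij.1 a * d ij.2 a' := by
  intro a a'
  set S : A₁ := ∑ ij ∈ antidiagonal n, d ij.1 a * d ij.2 a' with hS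
  rw [← sub_eq_zero]
  apply faith
  intro m
  have e1 : h n (φA (a * a') • m) = ∑ ij ∈ antidiagonal n, d ij.1 (a * a') • h ij.2 m :=
    hcompat n (a * a') m
  have e2 : h n (φA (a * a') • m) =
      ∑ ij ∈ antidiagonal n, ∑ kl ∈ antidiagonal ij.2, (d ij.1 a * d kl.1 a') • h kl.2 m := by
    rw [map_mul, mul_smul, hcompat]
    refine Finset.sum_congr rfl ?_
    intro ij _
    rw [hcompat, Finset.smul_sum]
    refine Finset.sum_congr rfl ?_
    intro kl _
    rw [mul_smul]
  -- rewrite e1's right side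
  have e1' : ∑ ij ∈ antidiagonal n, d ij.1 (a * a') • h ij.2 m =
      (∑ i ∈ Finset.range n, ∑ pq ∈ antidiagonal i, (d pq.1 a * d pq.2 a') • h (n - i) m)
        + d n (a * a') • m := by
    rw [Finset.Nat.sum_antidiagonal_eq_sum_range_succ_mk, Finset.sum_range_succ,
      Nat.sub_self, hh0]
    congr 1
    refine Finset.sum_congr rfl ?_
    intro i hi
    rw [hind i (Finset.mem_range.mp hi) a a', Finset.sum_smul]
  -- rewrite e2's right side
  have e2' : ∑ ij ∈ antidiagonal n, ∑ kl ∈ antidiagonal ij.2, (d ij.1 a * d kl.1 a') • h kl.2 m =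
      (∑ i ∈ Finset.range n, ∑ pq ∈ antidiagonal i, (d pq.1 a * d pq.2 a') • h (n - i) m)
        + S • m := by
    rw [sum_antidiagonal_assoc_aux n (fun i k l => (d i a * d k a') • h l m),
      Finset.Nat.sum_antidiagonal_eq_sum_range_succ_mk, Finset.sum_range_succ,
      Nat.sub_self, hh0]
    congr 1
    rw [hS, Finset.sum_smul]
    rfl
  have key : d n (a * a') • m = S • m := by
    have := e1.symm.trans e2
    rw [e1', e2'] at this
    exact add_left_cancel this
  rw [sub_smul, key, sub_self]
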